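/- If x̄ lies inside a nonempty closed convex set O ⊆ ℝ², then for every unit vector ẑ we have ⟨ẑ, x̄⟩ − sup_{y∈O} ⟨ẑ, y⟩ ≤ 0, and the supremum over unit ẑ of this expression equals minus the distance from x̄ to the boundary of O (the negated penetration depth). -/
import Mathlib


open scoped RealInnerProductSpace

noncomputable def suppFunE (S : Set (EuclideanSpace ℝ (Fin 2)))
    (z : EuclideanSpace ℝ (Fin 2)) : EReal :=
  ⨆ y : S, ((⟪z, (y : EuclideanSpace ℝ (Fin 2))⟫ : ℝ) : EReal)

/-- Penetration depth of a point: infimum of `‖z‖` over translations `z` with `x̄ + z ∉ O`. -/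
noncomputable def penPointE (xbar : EuclideanSpace ℝ (Fin 2))
    (O : Set (EuclideanSpace ℝ (Fin 2))) : EReal :=
  sInf {r : EReal | ∃ z : EuclideanSpace ℝ (Fin 2), r = (‖z‖ : EReal) ∧ xbar + z ∉ O}

open Metric

lemma ereal_le_coe_of_forall (a : EReal) (d : ℝ) (h : ∀ t : ℝ, d < t → a ≤ (t : EReal)) :
    a ≤ (d : EReal) := by
  refine le_of_forall_gt_imp_ge_of_dense fun c hc => ?_
  rcases EReal.exists_between_coe_real hc with ⟨t, ht1, ht2⟩
  exact (h t (by exact_mod_cast ht1)).trans ht2.le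

lemma ereal_coe_le_of_forall (a : EReal) (d : ℝ) (h : ∀ t : ℝ, t < d → (t : EReal) ≤ a) :
    (d : EReal) ≤ a := by
  by_contra hc
  push_neg at hc
  rcases EReal.exists_between_coe_real hc with ⟨t, ht1, ht2⟩
  exact absurd (h t (by exact_mod_cast ht2)) (not_le.2 ht1)

lemma pen_eq (O : Set (EuclideanSpace ℝ (Fin 2))) (xbar : EuclideanSpace ℝ (Fin 2))
    (hO : Oᶜ.Nonempty) : penPointE xbar O = ((infDist xbar Oᶜ : ℝ) : EReal) := by
  refine le_antisymm ?_ ?_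
  · refine ereal_le_coe_of_forall _ _ fun t ht => ?_
    obtain ⟨w, hw, hdist⟩ := (infDist_lt_iff hO).1 ht
    have hmem : ((‖w - xbar‖ : ℝ) : EReal) ∈
        {r : EReal | ∃ z : EuclideanSpace ℝ (Fin 2), r = (‖z‖ : EReal) ∧ xbar + z ∉ O} :=
      ⟨w - xbar, rfl, by simpa using hw⟩
    refine (sInf_le hmem).trans ?_
    have : ‖w - xbar‖ ≤ t := by
      rw [← dist_eq_norm, dist_comm]
      exact hdist.le
    exact_mod_cast this
  · refine le_sInf fun r hr => ?_
    obtain ⟨z, rfl, hz⟩ := hr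
    have : infDist xbar Oᶜ ≤ dist xbar (xbar + z) := infDist_le_dist_of_mem hz
    have h2 : dist xbar (xbar + z) = ‖z‖ := by
      rw [dist_eq_norm]; simp
    rw [h2] at this
    exact_mod_cast this

/-- if `x̄` lies inside a nonempty closed convex `O` with nonempty interior,
then for every unit `ẑ`, `⟪ẑ, x̄⟫ − h_O(ẑ) ≤ 0`, and the supremum of this expression over
unit directions equals the negated penetration depth. -/
theorem sup_over_unit_directions_of_mem
    (O : Set (EuclideanSpace ℝ (Fin 2)))
    (hne : O.Nonempty) (hcl : IsClosed O) (hconv : Convex ℝ O)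
    (hint : (interior O).Nonempty)
    (xbar : EuclideanSpace ℝ (Fin 2)) (hx : xbar ∈ O) :
    (∀ zhat : EuclideanSpace ℝ (Fin 2), ‖zhat‖ = 1 →
        ((⟪zhat, xbar⟫ : ℝ) : EReal) - suppFunE O zhat ≤ 0) ∧
      (⨆ zhat ∈ {z : EuclideanSpace ℝ (Fin 2) | ‖z‖ = 1},
          (((⟪zhat, xbar⟫ : ℝ) : EReal) - suppFunE O zhat)) = -penPointE xbar O := by
  have hself : ∀ zhat : EuclideanSpace ℝ (Fin 2), ∀ y ∈ O,
      ((⟪zhat, y⟫ : ℝ) : EReal) ≤ suppFunE O zhat := fun zhat y hy =>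
    le_iSup (fun p : O => ((⟪zhat, (p : EuclideanSpace ℝ (Fin 2))⟫ : ℝ) : EReal)) ⟨y, hy⟩
  constructor
  · intro zhat _
    refine EReal.sub_le_of_le_add ?_
    rw [zero_add]
    exact hself zhat xbar hx
  by_cases hO : Oᶜ.Nonempty
  · set d := infDist xbar Oᶜ with hd
    rw [pen_eq O xbar hO, ← EReal.coe_neg]
    refine le_antisymm ?_ ?_
    · refine iSup₂_le fun zhat hz1 => ?_
      have hz1 : ‖zhat‖ = 1 := hz1
      rcases eq_or_ne (suppFunE O zhat) ⊤ with ht | ht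
      · rw [ht, EReal.sub_top]; exact bot_le
      · have hbot : suppFunE O zhat ≠ ⊥ :=
          ((EReal.bot_lt_coe _).trans_le (hself zhat xbar hx)).ne'
        obtain ⟨r, hr⟩ : ∃ r : ℝ, suppFunE O zhat = (r : EReal) :=
          ⟨(suppFunE O zhat).toReal, (EReal.coe_toReal ht hbot).symm⟩
        have key : ∀ y ∈ O, ⟪zhat, y⟫ ≤ r := fun y hy => by
          have := hself zhat y hy
          rw [hr] at this
          exact_mod_cast this
        have hmem : ∀ t : ℝ, 0 ≤ t → t < d → xbar + t • zhat ∈ O := by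
          intro t h0 htd
          by_contra h
          have hle : d ≤ dist xbar (xbar + t • zhat) := infDist_le_dist_of_mem h
          have : dist xbar (xbar + t • zhat) = t := by
            rw [dist_eq_norm]
            simp [norm_smul, hz1, abs_of_nonneg h0]
          rw [this] at hle
          linarith
        have hinner : ∀ t : ℝ, ⟪zhat, xbar + t • zhat⟫ = ⟪zhat, xbar⟫ + t := by
          intro t
          rw [inner_add_right, real_inner_smul_right, real_inner_self_eq_norm_sq, hz1]
          ring
        have hd0 : 0 ≤ d := infDist_nonneg
        have hkey2 : ⟪zhat, xbar⟫ + d ≤ r := by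
          by_contra hcon
          push_neg at hcon
          set c := r - ⟪zhat, xbar⟫ with hc
          have hc0 : 0 ≤ c := sub_nonneg.2 (key xbar hx)
          have hcd : c < d := by simp only [hc]; linarith
          set t := (c + d) / 2 with htdef
          have h0t : 0 ≤ t := by positivity
          have htd : t < d := by simp only [htdef]; linarith
          have := key _ (hmem t h0t htd)
          rw [hinner t] at this
          have : t ≤ c := by linarith
          linarith
        rw [hr, ← EReal.coe_sub]
        exact EReal.coe_le_coe_iff.2 (by linarith)
    · refine ereal_coe_le_of_forall _ _ fun t ht => ?_
      have htd : d < -t := by linarith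
      obtain ⟨w, hw, hdist⟩ := (infDist_lt_iff hO).1 htd
      have hwO : w ∉ O := hw
      obtain ⟨f, u, hfu, huw⟩ := geometric_hahn_banach_closed_point hconv hcl hwO
      set v := (InnerProductSpace.toDual ℝ (EuclideanSpace ℝ (Fin 2))).symm f with hvdef
      have hv : ∀ x, ⟪v, x⟫ = f x := fun x => InnerProductSpace.toDual_symm_apply
      have hv0 : v ≠ 0 := by
        intro h
        obtain ⟨y0, hy0⟩ := hne
        have ha := hfu y0 hy0
        have hb := huw
        rw [← hv y0, h, inner_zero_left] at ha
        rw [← hv w, h, inner_zero_left] at hb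
        linarith
      have hnpos : 0 < ‖v‖ := norm_pos_iff.2 hv0
      set zhat := ‖v‖⁻¹ • v with hzdef
      have hz1 : ‖zhat‖ = 1 := norm_smul_inv_norm hv0
      have hzy : ∀ x, ⟪zhat, x⟫ = ‖v‖⁻¹ * f x := fun x => by
        rw [hzdef, real_inner_smul_left, hv]
      have hsup : suppFunE O zhat ≤ ((⟪zhat, w⟫ : ℝ) : EReal) := by
        refine iSup_le fun y => ?_
        refine EReal.coe_le_coe_iff.2 ?_
        rw [hzy, hzy]
        have h1 : f (y : EuclideanSpace ℝ (Fin 2)) ≤ f w :=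
          ((hfu _ y.2).trans huw).le
        exact mul_le_mul_of_nonneg_left h1 (by positivity)
      have hreal : t ≤ ⟪zhat, xbar⟫ - ⟪zhat, w⟫ := by
        have h1 : ⟪zhat, xbar⟫ - ⟪zhat, w⟫ = ⟪zhat, xbar - w⟫ := by
          rw [inner_sub_right]
        have h2 : |⟪zhat, xbar - w⟫| ≤ ‖zhat‖ * ‖xbar - w‖ := abs_real_inner_le_norm _ _
        have h3 : ‖xbar - w‖ = dist xbar w := (dist_eq_norm _ _).symm
        rw [hz1, one_mul, h3] at h2
        have h4 : -(dist xbar w) ≤ ⟪zhat, xbar - w⟫ := neg_le_of_abs_le h2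
        rw [h1]
        linarith
      calc (t : EReal) ≤ ((⟪zhat, xbar⟫ - ⟪zhat, w⟫ : ℝ) : EReal) := by exact_mod_cast hreal
        _ = ((⟪zhat, xbar⟫ : ℝ) : EReal) - ((⟪zhat, w⟫ : ℝ) : EReal) := EReal.coe_sub _ _
        _ ≤ ((⟪zhat, xbar⟫ : ℝ) : EReal) - suppFunE O zhat := EReal.sub_le_sub le_rfl hsup
        _ ≤ _ := le_iSup₂ (f := fun z (_ : z ∈ {z : EuclideanSpace ℝ (Fin 2) | ‖z‖ = 1}) =>
              ((⟪z, xbar⟫ : ℝ) : EReal) - suppFunE O z) zhat hz1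
  · have hU : O = Set.univ := by
      rwa [Set.not_nonempty_iff_eq_empty, Set.compl_empty_iff] at hO
    subst hU
    have hpen : penPointE xbar Set.univ = ⊤ := by
      have : {r : EReal | ∃ z : EuclideanSpace ℝ (Fin 2),
          r = (‖z‖ : EReal) ∧ xbar + z ∉ (Set.univ : Set (EuclideanSpace ℝ (Fin 2)))} = ∅ := by
        ext r; simp
      rw [penPointE, this, sInf_empty]
    rw [hpen]
    have htop : ∀ zhat : EuclideanSpace ℝ (Fin 2), ‖zhat‖ = 1 →
        suppFunE Set.univ zhat = ⊤ := by
      intro zhat h1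
      rw [EReal.eq_top_iff_forall_lt]
      intro y
      have hlt : ((y : ℝ) : EReal) < (((y + 1 : ℝ)) : EReal) := by
        exact_mod_cast lt_add_one y
      refine hlt.trans_le ?_
      have := hself zhat ((y + 1) • zhat) (Set.mem_univ _)
      have hin : ⟪zhat, (y + 1) • zhat⟫ = y + 1 := by
        rw [real_inner_smul_right, real_inner_self_eq_norm_sq, h1]; ring
      rwa [hin] at this
    have : (⨆ zhat ∈ {z : EuclideanSpace ℝ (Fin 2) | ‖z‖ = 1},
        (((⟪zhat, xbar⟫ : ℝ) : EReal) - suppFunE Set.univ zhat)) ≤ ⊥ := by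
      refine iSup₂_le fun z hz => ?_
      rw [htop z hz, EReal.sub_top]
    rw [le_bot_iff] at this
    rw [this]
    rfl
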